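/- Median estimator consistency under majority validity: let β̂_1^{(n)}, ..., β̂_J^{(n)} be estimators with β̂_j^{(n)} → β_j in probability, where β_j = β for all j in a set S with |S| > J/2 (strict majority), and β_j ≠ β possibly for j ∉ S. Then the sample median of (β̂_1^{(n)}, ..., β̂_J^{(n)}) converges in probability to β. -/

import Mathlib

open Finset Topology

lemma med_count {J : ℕ} (v : Fin J → ℝ) (p : ℝ → Prop) [DecidablePred p] :
    ((Multiset.map v Finset.univ.val).sort (· ≤ ·)).countP (fun x => decide (p x))
      = (Finset.univ.filter (fun j => p (v j))).card := by
  rw [← Multiset.coe_countP, Multiset.sort_eq, Multiset.countP_map]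
  rfl

lemma med_close {J : ℕ} (v : Fin J → ℝ) (B ε : ℝ) (hε : 0 < ε)
    (S : Finset (Fin J)) (hmaj : J < 2 * S.card)
    (hv : ∀ j ∈ S, dist (v j) B < ε) :
    dist (((Multiset.map v Finset.univ.val).sort (· ≤ ·)).getD ((J - 1) / 2) 0) B < ε := by
  set l := (Multiset.map v Finset.univ.val).sort (· ≤ ·) with hl
  have hlen : l.length = J := by simp [hl]
  have hSJ : S.card ≤ J := by simpa using S.card_le_univ
  have hJ : 0 < J := by omega
  set k := (J - 1) / 2 with hk
  have hkJ : k < J := by omega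
  have hkl : k < l.length := by omega
  have hsorted : l.Pairwise (· ≤ ·) := Multiset.pairwise_sort _ _
  rw [List.getD_eq_getElem l 0 hkl]
  by_contra hcon
  push_neg at hcon
  rw [Real.dist_eq, le_abs] at hcon
  have hlow : (Finset.univ.filter (fun j => v j ≤ B - ε)).card ≤ J - S.card := by
    have hsub : (Finset.univ.filter (fun j => v j ≤ B - ε)) ⊆ Sᶜ := by
      intro j hj
      simp only [Finset.mem_filter] at hj
      simp only [Finset.mem_compl]
      intro hjS
      have := hv j hjS
      rw [Real.dist_eq, abs_lt] at this
      linarith [hj.2, this.1]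
    calc _ ≤ Sᶜ.card := Finset.card_le_card hsub
      _ = J - S.card := by simp [Finset.card_compl]
  have hhigh : (Finset.univ.filter (fun j => B + ε ≤ v j)).card ≤ J - S.card := by
    have hsub : (Finset.univ.filter (fun j => B + ε ≤ v j)) ⊆ Sᶜ := by
      intro j hj
      simp only [Finset.mem_filter] at hj
      simp only [Finset.mem_compl]
      intro hjS
      have := hv j hjS
      rw [Real.dist_eq, abs_lt] at this
      linarith [hj.2, this.2]
    calc _ ≤ Sᶜ.card := Finset.card_le_card hsub
      _ = J - S.card := by simp [Finset.card_compl]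
  rcases hcon with h2 | h1
  · -- ε ≤ l[k] - B, i.e. B + ε ≤ l[k] : at least J - k elements ≥ B + ε
    have h2' : B + ε ≤ l[k] := by linarith
    have hdrop : ∀ x ∈ l.drop k, B + ε ≤ x := by
      intro x hx
      rw [List.mem_iff_getElem] at hx
      obtain ⟨i, hi, rfl⟩ := hx
      have hki : k + i < l.length := by
        simp [List.length_drop] at hi; omega
      rw [← List.getElem_drop' hki]
      have : l[k] ≤ l[k + i] := by
        have := hsorted.rel_get_of_le (a := ⟨k, hkl⟩) (b := ⟨k + i, by omega⟩)
          (by simp [Fin.le_def])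
        simpa using this
      linarith
    have hc2 : J - k ≤ l.countP (fun x => decide (B + ε ≤ x)) := by
      have hle := List.Sublist.countP_le (p := fun x => decide (B + ε ≤ x)) (List.drop_sublist k l)
      have heq : (l.drop k).countP (fun x => decide (B + ε ≤ x)) = J - k := by
        rw [List.countP_eq_length.mpr (by intro a ha; simpa using hdrop a ha)]
        simp [List.length_drop]; omega
      omega
    rw [med_count v (fun x => B + ε ≤ x)] at hc2
    omega
  · -- ε ≤ -(l[k] - B), i.e. l[k] ≤ B - ε : at least k+1 elements ≤ B - ε
    have h1' : l[k] ≤ B - ε := by linarith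
    have htake : ∀ x ∈ l.take (k + 1), x ≤ B - ε := by
      intro x hx
      rw [List.mem_iff_getElem] at hx
      obtain ⟨i, hi, rfl⟩ := hx
      have hik : i ≤ k := by
        simp [List.length_take] at hi
        omega
      rw [List.getElem_take]
      have : l[i]'(by omega) ≤ l[k] := by
        have := hsorted.rel_get_of_le (a := ⟨i, by omega⟩) (b := ⟨k, hkl⟩)
          (by simp [Fin.le_def]; omega)
        simpa using this
      linarith
    have hc1 : k + 1 ≤ l.countP (fun x => decide (x ≤ B - ε)) := by
      have hle := List.Sublist.countP_le (p := fun x => decide (x ≤ B - ε)) (List.take_sublist (k+1) l)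
      have heq : (l.take (k+1)).countP (fun x => decide (x ≤ B - ε)) = k + 1 := by
        rw [List.countP_eq_length.mpr (by intro a ha; simpa using htake a ha)]
        simp [List.length_take]; omega
      omega
    rw [med_count v (fun x => x ≤ B - ε)] at hc1
    omega

open MeasureTheory Filter

/-- Median estimator consistency under majority validity: if each estimator
β̂_j converges in probability to β_j, and a strict majority of the limits
equal the common value β, then the sample (lower) median converges in
probability to β. -/
theorem median_estimator_consistent
    {Ω : Type*} [MeasurableSpace Ω] (μ : Measure Ω) [IsProbabilityMeasure μ]
    (J : ℕ)
    (bhat : ℕ → Fin J → Ω → ℝ) (β : Fin J → ℝ) (B : ℝ)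
    (hcons : ∀ j, TendstoInMeasure μ (fun n => bhat n j) atTop (fun _ => β j))
    (S : Finset (Fin J)) (hmaj : J < 2 * S.card)
    (hS : ∀ j ∈ S, β j = B)
    (med : (Fin J → ℝ) → ℝ)
    (hmed : ∀ v, med v =
      ((Multiset.map v Finset.univ.val).sort (· ≤ ·)).getD ((J - 1) / 2) 0) :
    TendstoInMeasure μ (fun n ω => med (fun j => bhat n j ω)) atTop
      (fun _ => B) := by
  rw [tendstoInMeasure_iff_dist]
  intro ε hε
  have key : ∀ n, μ {ω | ε ≤ dist (med (fun j => bhat n j ω)) B}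
      ≤ ∑ j ∈ S, μ {ω | ε ≤ dist (bhat n j ω) (β j)} := by
    intro n
    refine le_trans (measure_mono ?_) (measure_biUnion_finset_le S _)
    intro ω hω
    simp only [Set.mem_setOf_eq] at hω
    by_contra hc
    simp only [Set.mem_iUnion, Set.mem_setOf_eq, not_exists, not_le] at hc
    have hall : ∀ j ∈ S, dist (bhat n j ω) B < ε := by
      intro j hj
      have := hc j hj
      rwa [hS j hj] at this
    have hclose := med_close (fun j => bhat n j ω) B ε hε S hmaj hall
    rw [hmed] at hω
    exact absurd hω (not_le.mpr hclose)
  have hsum : Tendsto (fun n => ∑ j ∈ S, μ {ω | ε ≤ dist (bhat n j ω) (β j)})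
      atTop (𝓝 0) := by
    have := tendsto_finset_sum S (fun j _ => tendstoInMeasure_iff_dist.mp (hcons j) ε hε)
    simpa using this
  exact tendsto_of_tendsto_of_tendsto_of_le_of_le tendsto_const_nhds hsum
    (fun n => zero_le) key
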